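/- Let X be a topological space and let A be a functionally closed subset of X which is well-covered in X. Then there exists a linear continuous mapping φ : C_p(A) → C_p(X) with φ(y)|_A = y for every y ∈ C_p(A). -/

import Mathlib

open Set Topology

/-- `C_p(X)`: the continuous real-valued functions on `X`, topologized by pointwise
convergence (i.e. as a subspace of `X → ℝ` with the product topology). -/
abbrev Cp (X : Type*) [TopologicalSpace X] : Type _ := {f : X → ℝ // Continuous f}

/-- `C_p*(X)`: the bounded continuous real-valued functions on `X`, topologized by
pointwise convergence. -/
abbrev CpStar (X : Type*) [TopologicalSpace X] : Type _ :=
  {f : X → ℝ // Continuous f ∧ ∃ M : ℝ, ∀ x, |f x| ≤ M}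

/-- A set is functionally open (a cozero set) if it is the cozero set of a
continuous real-valued function. -/
def FunctionallyOpen {X : Type*} [TopologicalSpace X] (U : Set X) : Prop :=
  ∃ f : X → ℝ, Continuous f ∧ U = f ⁻¹' ({0}ᶜ)

/-- A subset `A` is strongly functionally discrete in `X` if there is a family of
functionally open sets `G a ∋ a` (for `a ∈ A`) which is discrete in `X`: every point
of `X` has a neighborhood meeting `G a` for at most one `a ∈ A`. -/
def StronglyFunctionallyDiscrete {X : Type*} [TopologicalSpace X] (A : Set X) : Prop :=
  ∃ G : A → Set X,
    (∀ a : A, (a : X) ∈ G a) ∧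
    (∀ a : A, FunctionallyOpen (G a)) ∧
    (∀ x : X, ∃ V ∈ 𝓝 x, {a : A | (V ∩ G a).Nonempty}.Subsingleton)

/-- `A` is well-covered in `X`: there are a sequence of locally finite families
`(U n i : i ∈ I n)` of functionally open subsets of `X`, each covering `A`, and
continuous maps `lam n i : closure (U n i) → A`, such that for every `a ∈ A` and every
neighborhood `V` of `a` in `A` there are `n₀` and a neighborhood `U₀` of `a` in `X`
with `lam n i (U n i ∩ U₀) ⊆ V` for all `n ≥ n₀` and all `i`. -/
def WellCovered.{u, v} {X : Type v} [TopologicalSpace X] (A : Set X) : Prop :=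
  ∃ (I : ℕ → Type u) (U : ∀ n, I n → Set X)
    (lam : ∀ (n) (i : I n), closure (U n i) → A),
    (∀ n i, FunctionallyOpen (U n i)) ∧
    (∀ (n) (x : X), ∃ V ∈ 𝓝 x, {i : I n | (V ∩ U n i).Nonempty}.Finite) ∧
    (∀ n, A ⊆ ⋃ i, U n i) ∧
    (∀ n i, Continuous (lam n i)) ∧
    (∀ (a : X) (ha : a ∈ A), ∀ V : Set A, V ∈ 𝓝 (⟨a, ha⟩ : A) →
      ∃ (n₀ : ℕ) (U₀ : Set X), U₀ ∈ 𝓝 a ∧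
        ∀ n ≥ n₀, ∀ (i : I n) (x : X) (hx : x ∈ U n i ∩ U₀),
          lam n i ⟨x, subset_closure hx.1⟩ ∈ V)


set_option linter.unusedSectionVars false
set_option linter.unusedVariables false

namespace Stmt18Aux

open Function

universe u v

variable {X : Type v} [TopologicalSpace X] {A : Set X} {I : ℕ → Type u}

noncomputable def sfn (g : ∀ n, I n → X → ℝ) (n : ℕ) (x : X) : ℝ := ∑ᶠ i, g n i x

noncomputable def tfn (g : ∀ n, I n → X → ℝ) : ℕ → X → ℝ
  | 0 => sfn g 0
  | n+1 => fun x => min (tfn g n x) (sfn g (n+1) x)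

noncomputable def Dcut (h : X → ℝ) (g : ∀ n, I n → X → ℝ) (n : ℕ) (x : X) : ℝ :=
  max 0 (min 1 (2 - 4 * (h x / (h x + tfn g n x))))

noncomputable def dcut (h : X → ℝ) (n : ℕ) (x : X) : ℝ :=
  max 0 (min 1 (2 - 2 ^ (n + 1) * h x))

noncomputable def Ecut (h : X → ℝ) (g : ∀ n, I n → X → ℝ) (n : ℕ) (x : X) : ℝ :=
  Dcut h g n x * dcut h n x

noncomputable def gam (h : X → ℝ) (g : ∀ n, I n → X → ℝ) (n : ℕ) (x : X) : ℝ :=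
  Ecut h g n x - Ecut h g (n + 1) x

noncomputable def qfn (h : X → ℝ) (g : ∀ n, I n → X → ℝ) (n : ℕ) (i : I n) (x : X) : ℝ :=
  g n i x / max (sfn g n x) (h x)

open Classical in
noncomputable def vfn (U : ∀ n, I n → Set X) (lam : ∀ n (i : I n), closure (U n i) → A)
    (y : A → ℝ) (n : ℕ) (i : I n) (x : X) : ℝ :=
  if hx : x ∈ closure (U n i) then y (lam n i ⟨x, hx⟩) else 0

open Classical in
noncomputable def PhiFun (h : X → ℝ) (U : ∀ n, I n → Set X) (g : ∀ n, I n → X → ℝ)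
    (lam : ∀ n (i : I n), closure (U n i) → A) (y : A → ℝ) (x : X) : ℝ :=
  if hx : x ∈ A then y ⟨x, hx⟩
  else ∑ᶠ n, gam h g n x * ∑ᶠ i, qfn h g n i x * vfn U lam y n i x


theorem abs_finsum_weighted_sub_le {ι : Type*} {w v : ι → ℝ} {c ε : ℝ}
    (hw0 : ∀ i, 0 ≤ w i) (hwfin : (support w).Finite) (hw1 : ∑ᶠ i, w i = 1)
    (hv : ∀ i, w i ≠ 0 → |v i - c| ≤ ε) : |(∑ᶠ i, w i * v i) - c| ≤ ε := by
  classical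
  set s := hwfin.toFinset with hs
  have hsub : support w ⊆ ↑s := by simp [hs]
  have hsub2 : (support fun i => w i * v i) ⊆ ↑s := by
    refine subset_trans (fun i hi => ?_) hsub
    intro hwi
    exact hi (by simp [hwi])
  rw [finsum_eq_sum_of_support_subset w hsub] at hw1
  rw [finsum_eq_sum_of_support_subset _ hsub2]
  have heq : (∑ i ∈ s, w i * v i) - c = ∑ i ∈ s, w i * (v i - c) := by
    simp only [mul_sub, Finset.sum_sub_distrib, ← Finset.sum_mul, hw1, one_mul]
  rw [heq]
  calc |∑ i ∈ s, w i * (v i - c)| ≤ ∑ i ∈ s, |w i * (v i - c)| :=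
        Finset.abs_sum_le_sum_abs _ _
    _ ≤ ∑ i ∈ s, w i * ε := by
        refine Finset.sum_le_sum fun i _ => ?_
        by_cases hwi : w i = 0
        · simp [hwi]
        · rw [abs_mul, abs_of_nonneg (hw0 i)]
          exact mul_le_mul_of_nonneg_left (hv i hwi) (hw0 i)
    _ = ε := by rw [← Finset.sum_mul, hw1, one_mul]

/-- The bundled hypotheses of the construction. -/
structure Ctx (A : Set X) (h : X → ℝ) (U : ∀ n, I n → Set X) (g : ∀ n, I n → X → ℝ) : Prop where
  hh : Continuous h
  h0 : ∀ x, 0 ≤ h x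
  hA0 : ∀ x, x ∈ A ↔ h x = 0
  gc : ∀ n i, Continuous (g n i)
  g0 : ∀ n i x, 0 ≤ g n i x
  gU : ∀ n i x, x ∈ U n i ↔ g n i x ≠ 0
  hlf : ∀ n (x : X), ∃ V ∈ 𝓝 x, {i : I n | (V ∩ U n i).Nonempty}.Finite
  hcov : ∀ n, A ⊆ ⋃ i, U n i

variable {U : ∀ n, I n → Set X} {g : ∀ n, I n → X → ℝ} {h : X → ℝ}

namespace Ctx

variable (hc : Ctx A h U g)
include hc

theorem suppg_finite (n : ℕ) (x : X) : (support fun i => g n i x).Finite := by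
  obtain ⟨V, hV, hfin⟩ := hc.hlf n x
  refine hfin.subset fun i hi => ?_
  exact ⟨x, mem_of_mem_nhds hV, (hc.gU n i x).2 hi⟩

theorem lf_suppg (n : ℕ) : LocallyFinite fun i : I n => support fun x => g n i x := by
  intro x
  obtain ⟨V, hV, hfin⟩ := hc.hlf n x
  refine ⟨V, hV, hfin.subset fun i hi => ?_⟩
  obtain ⟨z, hz1, hz2⟩ := hi
  exact ⟨z, hz2, (hc.gU n i z).2 hz1⟩

theorem sfn_cont (n : ℕ) : Continuous (sfn g n) :=
  continuous_finsum (fun i => hc.gc n i) (hc.lf_suppg n)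

theorem sfn_nonneg (n : ℕ) (x : X) : 0 ≤ sfn g n x :=
  finsum_nonneg fun i => hc.g0 n i x

theorem sfn_pos (n : ℕ) {a : X} (ha : a ∈ A) : 0 < sfn g n a := by
  obtain ⟨_, ⟨i, rfl⟩, hi⟩ := hc.hcov n ha
  have hgi : g n i a ≠ 0 := (hc.gU n i a).1 hi
  have : g n i a ≤ sfn g n a :=
    single_le_finsum i (hc.suppg_finite n a) (fun j => hc.g0 n j a)
  exact lt_of_lt_of_le (lt_of_le_of_ne (hc.g0 n i a) (Ne.symm hgi)) this

theorem tfn_cont (n : ℕ) : Continuous (tfn g n) := by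
  induction n with
  | zero => exact hc.sfn_cont 0
  | succ n ih => exact ih.min (hc.sfn_cont (n+1))

theorem tfn_nonneg (n : ℕ) (x : X) : 0 ≤ tfn g n x := by
  induction n with
  | zero => exact hc.sfn_nonneg 0 x
  | succ n ih => exact le_min ih (hc.sfn_nonneg (n+1) x)

theorem tfn_pos (n : ℕ) {a : X} (ha : a ∈ A) : 0 < tfn g n a := by
  induction n with
  | zero => exact hc.sfn_pos 0 ha
  | succ n ih => exact lt_min ih (hc.sfn_pos (n+1) ha)

theorem tfn_le_sfn (n : ℕ) (x : X) : tfn g n x ≤ sfn g n x := by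
  cases n with
  | zero => exact le_rfl
  | succ n => exact min_le_right _ _

theorem tfn_anti {m n : ℕ} (hmn : m ≤ n) (x : X) : tfn g n x ≤ tfn g m x := by
  induction n with
  | zero => simp_all
  | succ n ih =>
    rcases Nat.lt_or_ge m (n+1) with hm | hm
    · exact (min_le_left _ _).trans (ih (Nat.lt_succ_iff.mp hm))
    · have : m = n + 1 := le_antisymm hmn hm
      subst this; exact le_rfl

theorem hx_pos {x : X} (hx : x ∉ A) : 0 < h x :=
  lt_of_le_of_ne (hc.h0 x) (Ne.symm fun hcc => hx ((hc.hA0 x).2 hcc))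

theorem denom_pos (n : ℕ) (x : X) : 0 < h x + tfn g n x := by
  by_cases hx : x ∈ A
  · have := hc.tfn_pos n hx
    linarith [hc.h0 x]
  · have := hc.hx_pos hx
    linarith [hc.tfn_nonneg n x]

theorem maxsh_pos (n : ℕ) (x : X) : 0 < max (sfn g n x) (h x) := by
  by_cases hx : x ∈ A
  · exact lt_max_of_lt_left (hc.sfn_pos n hx)
  · exact lt_max_of_lt_right (hc.hx_pos hx)

theorem Dcut_nonneg (n : ℕ) (x : X) : 0 ≤ Dcut h g n x := le_max_left _ _

theorem Dcut_le_one (n : ℕ) (x : X) : Dcut h g n x ≤ 1 :=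
  max_le zero_le_one (min_le_left _ _)

theorem Dcut_cont (n : ℕ) : Continuous (Dcut h g n) := by
  have hd : Continuous fun x => h x + tfn g n x := hc.hh.add (hc.tfn_cont n)
  have : Continuous fun x => h x / (h x + tfn g n x) :=
    hc.hh.div hd fun x => (hc.denom_pos n x).ne'
  exact continuous_const.max (continuous_const.min (by continuity))

theorem Dcut_anti (n : ℕ) (x : X) : Dcut h g (n + 1) x ≤ Dcut h g n x := by
  have key : h x / (h x + tfn g n x) ≤ h x / (h x + tfn g (n + 1) x) := by
    apply div_le_div_of_nonneg_left (hc.h0 x) (hc.denom_pos (n+1) x)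
    have := hc.tfn_anti (Nat.le_succ n) x
    linarith
  exact max_le_max le_rfl (min_le_min le_rfl (by linarith))

theorem Dcut_pos_lt {n : ℕ} {x : X} (hD : 0 < Dcut h g n x) :
    2 * h x < h x + tfn g n x := by
  have hm : 0 < min 1 (2 - 4 * (h x / (h x + tfn g n x))) := by
    rcases lt_max_iff.1 hD with h1 | h2
    · exact absurd h1 (lt_irrefl 0)
    · exact h2
  have h2 : h x / (h x + tfn g n x) < 1 / 2 := by
    have := lt_of_lt_of_le hm (min_le_right _ _)
    linarith
  have hden := hc.denom_pos n x
  rw [div_lt_div_iff₀ hden (by norm_num)] at h2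
  linarith

theorem Dcut_eq_one {n : ℕ} {x : X} (hx : 3 * h x ≤ tfn g n x) :
    Dcut h g n x = 1 := by
  have hden := hc.denom_pos n x
  have hq : h x / (h x + tfn g n x) ≤ 1 / 4 := by
    rw [div_le_div_iff₀ hden (by norm_num)]
    linarith
  have : (1 : ℝ) ≤ 2 - 4 * (h x / (h x + tfn g n x)) := by linarith
  rw [Dcut, min_eq_left this, max_eq_right zero_le_one]

theorem dcut_nonneg (n : ℕ) (x : X) : 0 ≤ dcut h n x := le_max_left _ _

theorem dcut_le_one (n : ℕ) (x : X) : dcut h n x ≤ 1 :=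
  max_le zero_le_one (min_le_left _ _)

theorem dcut_cont (n : ℕ) : Continuous (dcut h n) :=
  continuous_const.max (continuous_const.min (continuous_const.sub (continuous_const.mul hc.hh)))

theorem dcut_anti (n : ℕ) (x : X) : dcut h (n + 1) x ≤ dcut h n x := by
  have : (2 : ℝ) ^ (n + 1) * h x ≤ 2 ^ (n + 1 + 1) * h x := by
    have : (2 : ℝ) ^ (n + 1) ≤ 2 ^ (n + 1 + 1) :=
      pow_le_pow_right₀ (by norm_num) (Nat.le_succ _)
    nlinarith [hc.h0 x]
  exact max_le_max le_rfl (min_le_min le_rfl (by linarith))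

theorem dcut_eq_one {n : ℕ} {x : X} (hx : h x ≤ (1 / 2) ^ (n + 1)) : dcut h n x = 1 := by
  have hp : (0 : ℝ) < 2 ^ (n + 1) := by positivity
  have : (2 : ℝ) ^ (n + 1) * h x ≤ 1 := by
    have := mul_le_mul_of_nonneg_left hx (le_of_lt hp)
    calc (2:ℝ) ^ (n+1) * h x ≤ 2 ^ (n+1) * (1/2) ^ (n+1) := this
      _ = 1 := by rw [← mul_pow]; norm_num
  have h1 : (1 : ℝ) ≤ 2 - 2 ^ (n + 1) * h x := by linarith
  rw [dcut, min_eq_left h1, max_eq_right zero_le_one]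

theorem dcut_eq_zero {n : ℕ} {x : X} (hx : (1 / 2) ^ n ≤ h x) : dcut h n x = 0 := by
  have hp : (0 : ℝ) < 2 ^ (n + 1) := by positivity
  have h2 : (2 : ℝ) ≤ 2 ^ (n + 1) * h x := by
    have := mul_le_mul_of_nonneg_left hx (le_of_lt hp)
    calc (2:ℝ) = 2 ^ (n+1) * (1/2) ^ n := by
          rw [pow_succ', mul_assoc, ← mul_pow]; norm_num
      _ ≤ 2 ^ (n+1) * h x := this
  have : min 1 (2 - 2 ^ (n + 1) * h x) ≤ 0 := le_trans (min_le_right _ _) (by linarith)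
  rw [dcut, max_eq_left this]

theorem Ecut_nonneg (n : ℕ) (x : X) : 0 ≤ Ecut h g n x :=
  mul_nonneg (hc.Dcut_nonneg n x) (hc.dcut_nonneg n x)

theorem Ecut_le_one (n : ℕ) (x : X) : Ecut h g n x ≤ 1 := by
  have := mul_le_mul (hc.Dcut_le_one n x) (hc.dcut_le_one n x)
    (hc.dcut_nonneg n x) zero_le_one
  simpa [Ecut] using this

theorem Ecut_anti (n : ℕ) (x : X) : Ecut h g (n + 1) x ≤ Ecut h g n x :=
  mul_le_mul (hc.Dcut_anti n x) (hc.dcut_anti n x) (hc.dcut_nonneg _ _) (hc.Dcut_nonneg _ _)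

theorem Ecut_eq_one {n : ℕ} {x : X} (h1 : 3 * h x ≤ tfn g n x)
    (h2 : h x ≤ (1 / 2) ^ (n + 1)) : Ecut h g n x = 1 := by
  rw [Ecut, hc.Dcut_eq_one h1, hc.dcut_eq_one h2, mul_one]

theorem Ecut_cont (n : ℕ) : Continuous (Ecut h g n) :=
  (hc.Dcut_cont n).mul (hc.dcut_cont n)

theorem gam_nonneg (n : ℕ) (x : X) : 0 ≤ gam h g n x :=
  sub_nonneg.2 (hc.Ecut_anti n x)

theorem gam_cont (n : ℕ) : Continuous (gam h g n) :=
  (hc.Ecut_cont n).sub (hc.Ecut_cont (n+1))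

theorem gam_eq_zero_of_le {n : ℕ} {x : X} (hx : (1 / 2) ^ n ≤ h x) : gam h g n x = 0 := by
  have h1 : dcut h n x = 0 := hc.dcut_eq_zero hx
  have h2 : dcut h (n + 1) x = 0 := by
    refine hc.dcut_eq_zero (le_trans ?_ hx)
    exact pow_le_pow_of_le_one (by norm_num) (by norm_num) (Nat.le_succ n)
  simp [gam, Ecut, h1, h2]

theorem gam_ne_zero_lt {n : ℕ} {x : X} (hg : gam h g n x ≠ 0) : h x < tfn g n x := by
  have hE : 0 < Ecut h g n x := by
    rcases lt_or_eq_of_le (hc.Ecut_nonneg n x) with hp | hp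
    · exact hp
    · exfalso
      apply hg
      have h1 := hc.Ecut_anti n x
      have h2 := hc.Ecut_nonneg (n+1) x
      simp only [gam]
      linarith
  have hD : 0 < Dcut h g n x := by
    rcases lt_or_eq_of_le (hc.Dcut_nonneg n x) with hp | hp
    · exact hp
    · exfalso; rw [Ecut, ← hp, zero_mul] at hE; exact lt_irrefl 0 hE
  have := hc.Dcut_pos_lt hD
  linarith

theorem gam_support_bdd {x : X} (hx : x ∉ A) :
    ∃ N, ∀ n, N ≤ n → gam h g n x = 0 ∧ Ecut h g n x = 0 := by
  obtain ⟨N, hN⟩ := exists_pow_lt_of_lt_one (hc.hx_pos hx) (by norm_num : (1:ℝ)/2 < 1)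
  refine ⟨N, fun n hn => ?_⟩
  have hpow : (1 / 2 : ℝ) ^ n ≤ (1 / 2) ^ N :=
    pow_le_pow_of_le_one (by norm_num) (by norm_num) hn
  have hle : (1 / 2 : ℝ) ^ n ≤ h x := le_trans hpow (le_of_lt hN)
  refine ⟨hc.gam_eq_zero_of_le hle, ?_⟩
  simp [Ecut, hc.dcut_eq_zero hle]

theorem sum_gam {x : X} (hx : x ∉ A) : ∑ᶠ n, gam h g n x = Ecut h g 0 x := by
  obtain ⟨N, hN⟩ := hc.gam_support_bdd hx
  have hsupp : (support fun n => gam h g n x) ⊆ ↑(Finset.range N) := by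
    intro n hn
    simp only [Finset.coe_range, mem_Iio]
    by_contra hcc
    exact hn ((hN n (le_of_not_gt hcc)).1)
  rw [finsum_eq_sum_of_support_subset _ hsupp]
  have : ∑ n ∈ Finset.range N, gam h g n x = Ecut h g 0 x - Ecut h g N x := by
    simpa [gam] using Finset.sum_range_sub' (fun n => Ecut h g n x) N
  rw [this, (hN N le_rfl).2, sub_zero]


theorem qfn_nonneg (n : ℕ) (i : I n) (x : X) : 0 ≤ qfn h g n i x :=
  div_nonneg (hc.g0 n i x) (hc.maxsh_pos n x).le

theorem qfn_cont (n : ℕ) (i : I n) : Continuous (qfn h g n i) :=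
  (hc.gc n i).div ((hc.sfn_cont n).max hc.hh) fun x => (hc.maxsh_pos n x).ne'

theorem qfn_mem {n : ℕ} {i : I n} {x : X} (hq : qfn h g n i x ≠ 0) : x ∈ U n i :=
  (hc.gU n i x).2 fun h0 => hq (by simp [qfn, h0])

theorem sum_qfn {n : ℕ} {x : X} (hlt : h x < sfn g n x) : ∑ᶠ i, qfn h g n i x = 1 := by
  have hmax : max (sfn g n x) (h x) = sfn g n x := max_eq_left hlt.le
  have hs : 0 < sfn g n x := lt_of_le_of_lt (hc.h0 x) hlt
  have key : ∑ᶠ i, qfn h g n i x = (∑ᶠ i, g n i x) * (sfn g n x)⁻¹ := by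
    rw [finsum_mul _ _]
    refine finsum_congr fun i => ?_
    rw [qfn, hmax, div_eq_mul_inv]
  rw [key]
  exact mul_inv_cancel₀ hs.ne'

theorem isOpen_U (n : ℕ) (i : I n) : IsOpen (U n i) := by
  have : U n i = (g n i) ⁻¹' ({0}ᶜ) := Set.ext fun x => hc.gU n i x
  rw [this]
  exact isOpen_compl_singleton.preimage (hc.gc n i)

theorem supp_qv_subset (lam : ∀ n (i : I n), closure (U n i) → A) (y : A → ℝ) (n : ℕ) (x : X) :
    (support fun i => qfn h g n i x * vfn U lam y n i x) ⊆ support fun i => g n i x :=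
  fun i hi hg0 => hi (by simp [qfn, hg0])

theorem qv_cont (lam : ∀ n (i : I n), closure (U n i) → A)
    (lamc : ∀ n i, Continuous (lam n i)) {y : A → ℝ} (hy : Continuous y) (n : ℕ) (i : I n) :
    Continuous fun x => qfn h g n i x * vfn U lam y n i x := by
  set f : Bool → Set X := fun b => bif b then closure (U n i) else (U n i)ᶜ with hf
  have hcov2 : ⋃ b, f b = univ := by
    apply eq_univ_of_forall
    intro x
    by_cases hx : x ∈ U n i
    · exact mem_iUnion.2 ⟨true, subset_closure hx⟩
    · exact mem_iUnion.2 ⟨false, hx⟩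
  refine LocallyFinite.continuous (locallyFinite_of_finite f) hcov2 ?_ ?_
  · rintro (_|_) <;> simp only [hf, Bool.cond_false, Bool.cond_true]
    · exact (hc.isOpen_U n i).isClosed_compl
    · exact isClosed_closure
  · rintro (_|_) <;> simp only [hf, Bool.cond_false, Bool.cond_true]
    · -- on (U n i)ᶜ the function is 0
      refine (continuousOn_const (c := (0:ℝ))).congr fun x hx => ?_
      have hg0 : g n i x = 0 := by
        by_contra hne
        exact hx ((hc.gU n i x).2 hne)
      simp [qfn, hg0]
    · -- on closure (U n i)
      rw [continuousOn_iff_continuous_restrict]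
      have : domRestrict (closure (U n i)) (fun x => qfn h g n i x * vfn U lam y n i x)
          = fun z : closure (U n i) => qfn h g n i z.1 * y (lam n i z) := by
        funext z
        simp only [domRestrict, vfn, dif_pos z.2]
      rw [this]
      exact ((hc.qfn_cont n i).comp continuous_subtype_val).mul (hy.comp (lamc n i))

theorem inn_cont (lam : ∀ n (i : I n), closure (U n i) → A)
    (lamc : ∀ n i, Continuous (lam n i)) {y : A → ℝ} (hy : Continuous y) (n : ℕ) :
    Continuous fun x => ∑ᶠ i, qfn h g n i x * vfn U lam y n i x := by
  refine continuous_finsum (fun i => hc.qv_cont lam lamc hy n i) ?_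
  refine (hc.lf_suppg n).subset fun i => ?_
  intro x hx
  intro hg0
  exact hx (by simp [qfn, hg0])

theorem isClosed_A : IsClosed A := by
  have : A = h ⁻¹' {0} := by
    ext x
    simp [hc.hA0 x]
  rw [this]
  exact isClosed_singleton.preimage hc.hh

theorem PhiFun_repr (lam : ∀ n (i : I n), closure (U n i) → A) {x : X} (hx : x ∉ A)
    {N : ℕ} (hN : ∀ n, N ≤ n → gam h g n x = 0)
    {F : ∀ n, Finset (I n)} (hF : ∀ n, (support fun i => g n i x) ⊆ ↑(F n)) (y : A → ℝ) :
    PhiFun h U g lam y x =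
      ∑ n ∈ Finset.range N, gam h g n x * ∑ i ∈ F n, qfn h g n i x * vfn U lam y n i x := by
  rw [PhiFun, dif_neg hx]
  have houter : (support fun n => gam h g n x * ∑ᶠ i, qfn h g n i x * vfn U lam y n i x)
      ⊆ ↑(Finset.range N) := by
    intro n hn
    simp only [Finset.coe_range, mem_Iio]
    by_contra hcc
    exact hn (by simp [hN n (le_of_not_gt hcc)])
  rw [finsum_eq_sum_of_support_subset _ houter]
  refine Finset.sum_congr rfl fun n _ => ?_
  congr 1
  exact finsum_eq_sum_of_support_subset _ (subset_trans (hc.supp_qv_subset lam y n x) (hF n))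

theorem PhiFun_contAt_off (lam : ∀ n (i : I n), closure (U n i) → A)
    (lamc : ∀ n i, Continuous (lam n i)) {y : A → ℝ} (hy : Continuous y)
    {x₀ : X} (hx₀ : x₀ ∉ A) : ContinuousAt (PhiFun h U g lam y) x₀ := by
  obtain ⟨N, hN⟩ := exists_pow_lt_of_lt_one (hc.hx_pos hx₀) (by norm_num : (1:ℝ)/2 < 1)
  have hVopen : IsOpen ({x : X | (1/2:ℝ)^N < h x} ∩ Aᶜ) :=
    (isOpen_lt continuous_const hc.hh).inter hc.isClosed_A.isOpen_compl
  have hVmem : ({x : X | (1/2:ℝ)^N < h x} ∩ Aᶜ) ∈ 𝓝 x₀ :=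
    hVopen.mem_nhds ⟨hN, hx₀⟩
  have hG : Continuous fun x => ∑ n ∈ Finset.range N, gam h g n x *
      ∑ᶠ i, qfn h g n i x * vfn U lam y n i x := by
    refine continuous_finset_sum _ fun n _ => ?_
    exact (hc.gam_cont n).mul (hc.inn_cont lam lamc hy n)
  refine hG.continuousAt.congr ?_
  refine Filter.eventuallyEq_of_mem hVmem fun x hx => ?_
  have hgz : ∀ n, N ≤ n → gam h g n x = 0 := by
    intro n hn
    refine hc.gam_eq_zero_of_le (le_trans ?_ hx.1.le)
    exact pow_le_pow_of_le_one (by norm_num) (by norm_num) hn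
  rw [PhiFun, dif_neg hx.2]
  have houter : (support fun n => gam h g n x * ∑ᶠ i, qfn h g n i x * vfn U lam y n i x)
      ⊆ ↑(Finset.range N) := by
    intro n hn
    simp only [Finset.coe_range, mem_Iio]
    by_contra hcc
    exact hn (by simp [hgz n (le_of_not_gt hcc)])
  rw [finsum_eq_sum_of_support_subset _ houter]

theorem PhiFun_contAt_mem (lam : ∀ n (i : I n), closure (U n i) → A)
    (hconv : ∀ (a : X) (ha : a ∈ A), ∀ V : Set A, V ∈ 𝓝 (⟨a, ha⟩ : A) →
      ∃ (n₀ : ℕ) (U₀ : Set X), U₀ ∈ 𝓝 a ∧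
        ∀ n ≥ n₀, ∀ (i : I n) (x : X) (hx : x ∈ U n i ∩ U₀),
          lam n i ⟨x, subset_closure hx.1⟩ ∈ V)
    {y : A → ℝ} (hy : Continuous y) {a : X} (ha : a ∈ A) :
    ContinuousAt (PhiFun h U g lam y) a := by
  rw [ContinuousAt]
  have hPa : PhiFun h U g lam y a = y ⟨a, ha⟩ := dif_pos ha
  rw [hPa, Metric.tendsto_nhds]
  intro ε hε
  set c := y ⟨a, ha⟩ with hcdef
  -- the neighborhood V in A
  have hVopen : IsOpen {b : A | |y b - c| < ε/2} :=
    isOpen_lt ((hy.sub continuous_const).abs) continuous_const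
  have hVnhds : {b : A | |y b - c| < ε/2} ∈ 𝓝 (⟨a, ha⟩ : A) :=
    hVopen.mem_nhds (by simp [hcdef]; positivity)
  obtain ⟨n₀, U₀, hU₀, hconv'⟩ := hconv a ha _ hVnhds
  obtain ⟨O, hO, hOsub⟩ := (mem_nhds_subtype A ⟨a, ha⟩ _).1 hVnhds
  have htpos : 0 < tfn g n₀ a := hc.tfn_pos n₀ ha
  have hWt : {x : X | tfn g n₀ a / 2 < tfn g n₀ x} ∈ 𝓝 a :=
    (isOpen_lt continuous_const (hc.tfn_cont n₀)).mem_nhds (by simp; linarith)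
  have hWh : {x : X | h x < min (tfn g n₀ a / 6) ((1/2:ℝ)^(n₀+1))} ∈ 𝓝 a := by
    refine (isOpen_lt hc.hh continuous_const).mem_nhds ?_
    have : h a = 0 := (hc.hA0 a).1 ha
    simp only [mem_setOf_eq, this, lt_min_iff]
    constructor
    · linarith
    · positivity
  filter_upwards [hU₀, hWt, hWh, hO] with x hxU₀ hxWt hxWh hxO
  rw [Real.dist_eq]
  by_cases hxA : x ∈ A
  · rw [PhiFun, dif_pos hxA]
    have : (⟨x, hxA⟩ : A) ∈ {b : A | |y b - c| < ε/2} :=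
      hOsub (show (⟨x, hxA⟩ : A) ∈ Subtype.val ⁻¹' O from hxO)
    calc |y ⟨x, hxA⟩ - c| < ε/2 := this
      _ < ε := by linarith
  · -- x outside A
    have hx6 : h x < tfn g n₀ a / 6 := lt_of_lt_of_le hxWh (min_le_left _ _)
    have hxpow : h x < (1/2:ℝ)^(n₀+1) := lt_of_lt_of_le hxWh (min_le_right _ _)
    have key1 : ∀ m, m ≤ n₀ → Ecut h g m x = 1 := by
      intro m hm
      refine hc.Ecut_eq_one ?_ ?_
      · have h1 : tfn g n₀ x ≤ tfn g m x := hc.tfn_anti hm x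
        linarith
      · refine le_trans hxpow.le ?_
        exact pow_le_pow_of_le_one (by norm_num) (by norm_num) (Nat.succ_le_succ hm)
    have key2 : ∑ᶠ n, gam h g n x = 1 := by
      rw [hc.sum_gam hxA, key1 0 (Nat.zero_le _)]
    have key3 : ∀ n, gam h g n x ≠ 0 → n₀ ≤ n := by
      intro n hgn
      by_contra hcc
      push_neg at hcc
      apply hgn
      have h1 : Ecut h g n x = 1 := key1 n hcc.le
      have h2 : Ecut h g (n+1) x = 1 := key1 (n+1) hcc
      simp [gam, h1, h2]
    have key4 : ∀ n, gam h g n x ≠ 0 →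
        |(∑ᶠ i, qfn h g n i x * vfn U lam y n i x) - c| ≤ ε/2 := by
      intro n hgn
      have hlt : h x < sfn g n x :=
        lt_of_lt_of_le (hc.gam_ne_zero_lt hgn) (hc.tfn_le_sfn n x)
      have hsupfin : (support fun i => qfn h g n i x).Finite := by
        refine (hc.suppg_finite n x).subset fun i hi hg0 => hi ?_
        simp [qfn, hg0]
      refine abs_finsum_weighted_sub_le (fun i => hc.qfn_nonneg n i x) hsupfin
        (hc.sum_qfn hlt) ?_
      intro i hqi
      have hxU : x ∈ U n i := hc.qfn_mem hqi
      have hmem := hconv' n (key3 n hgn) i x ⟨hxU, hxU₀⟩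
      rw [vfn, dif_pos (subset_closure hxU)]
      exact le_of_lt hmem
    -- assemble
    have hrepr : PhiFun h U g lam y x =
        ∑ᶠ n, gam h g n x * ∑ᶠ i, qfn h g n i x * vfn U lam y n i x := dif_neg hxA
    rw [hrepr]
    obtain ⟨N, hN⟩ := hc.gam_support_bdd hxA
    have hsupfin : (support fun n => gam h g n x).Finite := by
      refine Set.Finite.subset (Set.finite_Iio N) fun n hn => ?_
      simp only [mem_Iio]
      by_contra hcc
      exact hn ((hN n (le_of_not_gt hcc)).1)
    have := abs_finsum_weighted_sub_le (w := fun n => gam h g n x)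
      (v := fun n => ∑ᶠ i, qfn h g n i x * vfn U lam y n i x) (c := c) (ε := ε/2)
      (fun n => hc.gam_nonneg n x) hsupfin key2 key4
    calc |(∑ᶠ n, gam h g n x * ∑ᶠ i, qfn h g n i x * vfn U lam y n i x) - c| ≤ ε/2 := this
      _ < ε := by linarith


theorem PhiFun_cont (lam : ∀ n (i : I n), closure (U n i) → A)
    (lamc : ∀ n i, Continuous (lam n i))
    (hconv : ∀ (a : X) (ha : a ∈ A), ∀ V : Set A, V ∈ 𝓝 (⟨a, ha⟩ : A) →
      ∃ (n₀ : ℕ) (U₀ : Set X), U₀ ∈ 𝓝 a ∧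
        ∀ n ≥ n₀, ∀ (i : I n) (x : X) (hx : x ∈ U n i ∩ U₀),
          lam n i ⟨x, subset_closure hx.1⟩ ∈ V)
    {y : A → ℝ} (hy : Continuous y) : Continuous (PhiFun h U g lam y) := by
  rw [continuous_iff_continuousAt]
  intro x
  by_cases hx : x ∈ A
  · exact hc.PhiFun_contAt_mem lam hconv hy hx
  · exact hc.PhiFun_contAt_off lam lamc hy hx

theorem PhiFun_cont_in_y (lam : ∀ n (i : I n), closure (U n i) → A) (x : X) :
    Continuous fun y : {f : A → ℝ // Continuous f} => PhiFun h U g lam y.1 x := by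
  by_cases hx : x ∈ A
  · have : (fun y : {f : A → ℝ // Continuous f} => PhiFun h U g lam y.1 x)
        = fun y => y.1 ⟨x, hx⟩ := funext fun y => dif_pos hx
    rw [this]
    exact (continuous_apply _).comp continuous_subtype_val
  · obtain ⟨N, hN⟩ := hc.gam_support_bdd hx
    have hF : ∀ n, (support fun i => g n i x) ⊆ ↑((hc.suppg_finite n x).toFinset) :=
      fun n => by simp
    have hrw : (fun y : {f : A → ℝ // Continuous f} => PhiFun h U g lam y.1 x)
        = fun y => ∑ n ∈ Finset.range N, gam h g n x *
            ∑ i ∈ (hc.suppg_finite n x).toFinset,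
              qfn h g n i x * vfn U lam y.1 n i x :=
      funext fun y => hc.PhiFun_repr lam hx (fun n hn => (hN n hn).1) hF y.1
    rw [hrw]
    refine continuous_finset_sum _ fun n _ => continuous_const.mul ?_
    refine continuous_finset_sum _ fun i _ => continuous_const.mul ?_
    by_cases hcl : x ∈ closure (U n i)
    · have : (fun y : {f : A → ℝ // Continuous f} => vfn U lam y.1 n i x)
          = fun y => y.1 (lam n i ⟨x, hcl⟩) := funext fun y => dif_pos hcl
      rw [this]
      exact (continuous_apply _).comp continuous_subtype_val
    · have : (fun y : {f : A → ℝ // Continuous f} => vfn U lam y.1 n i x)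
          = fun _ => (0:ℝ) := funext fun y => dif_neg hcl
      rw [this]
      exact continuous_const

theorem PhiFun_linear (lam : ∀ n (i : I n), closure (U n i) → A) {cc dd : ℝ}
    {y z w : A → ℝ} (hw : ∀ a : A, w a = cc * y a + dd * z a) (x : X) :
    PhiFun h U g lam w x = cc * PhiFun h U g lam y x + dd * PhiFun h U g lam z x := by
  by_cases hx : x ∈ A
  · simp only [PhiFun, dif_pos hx]
    exact hw ⟨x, hx⟩
  · obtain ⟨N, hN⟩ := hc.gam_support_bdd hx
    have hF : ∀ n, (support fun i => g n i x) ⊆ ↑((hc.suppg_finite n x).toFinset) :=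
      fun n => by simp
    rw [hc.PhiFun_repr lam hx (fun n hn => (hN n hn).1) hF w,
        hc.PhiFun_repr lam hx (fun n hn => (hN n hn).1) hF y,
        hc.PhiFun_repr lam hx (fun n hn => (hN n hn).1) hF z]
    have hv : ∀ (n : ℕ) (i : I n),
        vfn U lam w n i x = cc * vfn U lam y n i x + dd * vfn U lam z n i x := by
      intro n i
      by_cases hcl : x ∈ closure (U n i)
      · simp only [vfn, dif_pos hcl]
        exact hw _
      · simp [vfn, dif_neg hcl]
    rw [Finset.mul_sum, Finset.mul_sum, ← Finset.sum_add_distrib]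
    refine Finset.sum_congr rfl fun n _ => ?_
    have hinner : ∑ i ∈ (hc.suppg_finite n x).toFinset, qfn h g n i x * vfn U lam w n i x
        = cc * (∑ i ∈ (hc.suppg_finite n x).toFinset, qfn h g n i x * vfn U lam y n i x)
          + dd * (∑ i ∈ (hc.suppg_finite n x).toFinset, qfn h g n i x * vfn U lam z n i x) := by
      rw [Finset.mul_sum, Finset.mul_sum, ← Finset.sum_add_distrib]
      refine Finset.sum_congr rfl fun i _ => ?_
      rw [hv n i]
      ring
    rw [hinner]
    ring

theorem PhiFun_apply_mem (lam : ∀ n (i : I n), closure (U n i) → A) (y : A → ℝ)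
    {a : X} (ha : a ∈ A) : PhiFun h U g lam y a = y ⟨a, ha⟩ := dif_pos ha


end Ctx

end Stmt18Aux

/-- For a well-covered functionally closed subset `A` of `X` there is a linear
continuous extender `φ : C_p(A) → C_p(X)`. -/
theorem stmt_18 {X : Type v} [TopologicalSpace X] (A : Set X)
    (hA : FunctionallyOpen Aᶜ) (hwc : WellCovered.{u} A) :
    ∃ φ : Cp A → Cp X, Continuous φ ∧
      (∀ (c d : ℝ) (y z w : Cp A), (∀ a : A, w.1 a = c * y.1 a + d * z.1 a) →
        ∀ x : X, (φ w).1 x = c * (φ y).1 x + d * (φ z).1 x) ∧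
      (∀ y : Cp A, ∀ a : A, (φ y).1 a = y.1 a) := by
  classical
  obtain ⟨f₀, hf₀c, hf₀⟩ := hA
  obtain ⟨I, U, lam, hfo, hlf, hcov, lamc, hconv⟩ := hwc
  choose f hfc hfU using hfo
  set g : ∀ n, I n → X → ℝ := fun n i x => |f n i x| with hgdef
  set h : X → ℝ := fun x => |f₀ x| with hhdef
  have hc : Stmt18Aux.Ctx A h U g :=
    { hh := hf₀c.abs
      h0 := fun x => abs_nonneg _
      hA0 := fun x => by
        have h1 : x ∈ Aᶜ ↔ f₀ x ≠ 0 := by rw [hf₀]; simp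
        calc x ∈ A ↔ x ∉ Aᶜ := (notMem_compl_iff).symm
          _ ↔ ¬(f₀ x ≠ 0) := by rw [h1]
          _ ↔ f₀ x = 0 := not_not
          _ ↔ h x = 0 := by simp [hhdef]
      gc := fun n i => (hfc n i).abs
      g0 := fun n i x => abs_nonneg _
      gU := fun n i x => by
        have h1 : x ∈ U n i ↔ f n i x ≠ 0 := by rw [hfU n i]; simp
        rw [h1]
        simp [hgdef]
      hlf := hlf
      hcov := hcov }
  refine ⟨fun y => ⟨Stmt18Aux.PhiFun h U g lam y.1,
      hc.PhiFun_cont lam lamc hconv y.2⟩, ?_, ?_, ?_⟩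
  · refine Continuous.subtype_mk ?_ _
    refine continuous_pi fun x => ?_
    exact hc.PhiFun_cont_in_y lam x
  · intro c d y z w hw x
    exact hc.PhiFun_linear lam hw x
  · intro y a
    have := hc.PhiFun_apply_mem lam y.1 a.2
    simpa using this
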